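/- Let X be a random vector in ℝ^d with E‖X‖² < ∞, mean m_x, and diagonal covariance Σ_x = diag(σ₁², …, σ_d²) with σ_i > 0 for every i. Let M = diag(w₁, …, w_d) with w_i ≥ 0, and let ω be an MCAR mask with probability vector p ∈ (0,1]^d, independent of X. Let μ be the law of X and μ^NA the law of the zero-imputed vector X ⊙ ω. Then for every probability measure γ on ℝ^d × ℝ^d whose first marginal is μ^NA and whose second marginal is μ, ∫ (x − y)ᵀ M (x − y) dγ(x,y) ≥ ‖(P − I_d) m_x‖_M² + Σ_{i=1}^d w_i [σ_i − √(p_i) · √(σ_i² + (1 − p_i)(m_x)_i²)]². In particular, the squared 2-Wasserstein distance with ground cost ‖x − y‖_M² between μ^NA and μ is bounded below by this quantity. -/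

import Mathlib

open MeasureTheory ProbabilityTheory Matrix
open scoped ENNReal NNReal

private lemma cs_integral {α : Type*} [MeasurableSpace α] {ν : Measure α}
    {f g : α → ℝ} (hf : MemLp f 2 ν) (hg : MemLp g 2 ν) :
    ∫ x, f x * g x ∂ν ≤ Real.sqrt (∫ x, f x ^ 2 ∂ν) * Real.sqrt (∫ x, g x ^ 2 ∂ν) := by
  have hpq : Real.HolderConjugate 2 2 := Real.HolderConjugate.two_two
  have hfg : Integrable (fun x => f x * g x) ν := by
    have h2 : Integrable (fun x => (f x ^ 2 + g x ^ 2) / 2) ν :=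
      (hf.integrable_sq.add hg.integrable_sq).div_const 2
    refine h2.mono' (hf.aestronglyMeasurable.mul hg.aestronglyMeasurable)
      (Filter.Eventually.of_forall fun x => ?_)
    rw [Real.norm_eq_abs, abs_mul]
    nlinarith [sq_nonneg (|f x| - |g x|), abs_nonneg (f x), abs_nonneg (g x),
      sq_abs (f x), sq_abs (g x)]
  have habs : ∀ y : ℝ, |y| ^ (2:ℝ) = y ^ 2 := fun y => by
    rw [show (2:ℝ) = ((2:ℕ):ℝ) by norm_num, Real.rpow_natCast, sq_abs]
  have hof : (2 : ℝ≥0∞) = ENNReal.ofReal (2:ℝ) := by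
    rw [ENNReal.ofReal_ofNat]
  have key := integral_mul_le_Lp_mul_Lq_of_nonneg hpq
    (Filter.Eventually.of_forall fun x => abs_nonneg (f x))
    (Filter.Eventually.of_forall fun x => abs_nonneg (g x))
    (hof ▸ hf.norm) (hof ▸ hg.norm)
  calc ∫ x, f x * g x ∂ν ≤ ∫ x, |f x| * |g x| ∂ν := by
        refine integral_mono hfg
          (hfg.abs.congr (Filter.Eventually.of_forall fun x => abs_mul _ _)) fun x => ?_
        exact le_trans (le_abs_self _) (le_of_eq (abs_mul _ _))
    _ ≤ (∫ x, |f x| ^ (2:ℝ) ∂ν) ^ ((1:ℝ)/2) * (∫ x, |g x| ^ (2:ℝ) ∂ν) ^ ((1:ℝ)/2) := key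
    _ = Real.sqrt (∫ x, f x ^ 2 ∂ν) * Real.sqrt (∫ x, g x ^ 2 ∂ν) := by
        simp only [habs, ← Real.sqrt_eq_rpow]

private lemma integral_sub_const_sq {α : Type*} [MeasurableSpace α] (ν : Measure α)
    [IsProbabilityMeasure ν] (u : α → ℝ) (c : ℝ) (hu : Integrable u ν)
    (hu2 : Integrable (fun x => u x ^ 2) ν) :
    ∫ x, (u x - c) ^ 2 ∂ν = (∫ x, u x ^ 2 ∂ν) - 2 * c * (∫ x, u x ∂ν) + c ^ 2 := by
  have h : (fun x => (u x - c) ^ 2) = fun x => (u x ^ 2 - (2 * c) * u x) + c ^ 2 := by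
    funext x; ring
  have h1 : Integrable (fun x => u x ^ 2 - 2 * c * u x) ν := hu2.sub (hu.const_mul _)
  have h2 : Integrable (fun x => 2 * c * u x) ν := hu.const_mul _
  rw [h, integral_add h1 (integrable_const _), integral_sub hu2 h2, integral_const_mul,
    integral_const]
  simp [measure_univ]

private lemma one_dim {α : Type*} [MeasurableSpace α] (ν : Measure α) [IsProbabilityMeasure ν]
    {u v : α → ℝ} (hu : MemLp u 2 ν) (hv : MemLp v 2 ν) {a b A B : ℝ}
    (ha : ∫ x, u x ∂ν = a) (hA : ∫ x, u x ^ 2 ∂ν = A)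
    (hb : ∫ x, v x ∂ν = b) (hB : ∫ x, v x ^ 2 ∂ν = B) :
    (a - b) ^ 2 + (Real.sqrt (B - b ^ 2) - Real.sqrt (A - a ^ 2)) ^ 2
      ≤ ∫ x, (u x - v x) ^ 2 ∂ν := by
  have hui : Integrable u ν := hu.integrable one_le_two
  have hvi : Integrable v ν := hv.integrable one_le_two
  have hu2 : Integrable (fun x => u x ^ 2) ν := hu.integrable_sq
  have hv2 : Integrable (fun x => v x ^ 2) ν := hv.integrable_sq
  have hf : MemLp (fun x => u x - a) 2 ν := hu.sub (memLp_const a)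
  have hg : MemLp (fun x => v x - b) 2 ν := hv.sub (memLp_const b)
  have huv : Integrable (fun x => u x * v x) ν := by
    have h2 : Integrable (fun x => (u x ^ 2 + v x ^ 2) / 2) ν := (hu2.add hv2).div_const 2
    refine h2.mono' (hu.aestronglyMeasurable.mul hv.aestronglyMeasurable)
      (Filter.Eventually.of_forall fun x => ?_)
    rw [Real.norm_eq_abs, abs_mul]
    nlinarith [sq_nonneg (|u x| - |v x|), abs_nonneg (u x), abs_nonneg (v x),
      sq_abs (u x), sq_abs (v x)]
  have hVu : ∫ x, (u x - a) ^ 2 ∂ν = A - a ^ 2 := by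
    rw [integral_sub_const_sq ν u a hui hu2, ha, hA]; ring
  have hVv : ∫ x, (v x - b) ^ 2 ∂ν = B - b ^ 2 := by
    rw [integral_sub_const_sq ν v b hvi hv2, hb, hB]; ring
  have hVu0 : 0 ≤ A - a ^ 2 := hVu ▸ integral_nonneg fun x => sq_nonneg _
  have hVv0 : 0 ≤ B - b ^ 2 := hVv ▸ integral_nonneg fun x => sq_nonneg _
  have hcross : ∫ x, (u x - a) * (v x - b) ∂ν = (∫ x, u x * v x ∂ν) - a * b := by
    have h : (fun x => (u x - a) * (v x - b))
        = fun x => (u x * v x - (b * u x + a * v x)) + a * b := by funext x; ring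
    have k1 : Integrable (fun x => b * u x + a * v x) ν := (hui.const_mul b).add (hvi.const_mul a)
    have k2 : Integrable (fun x => u x * v x - (b * u x + a * v x)) ν := huv.sub k1
    have k3 : Integrable (fun x => b * u x) ν := hui.const_mul b
    have k4 : Integrable (fun x => a * v x) ν := hvi.const_mul a
    rw [h, integral_add k2 (integrable_const _), integral_sub huv k1, integral_add k3 k4,
      integral_const_mul, integral_const_mul, integral_const, ha, hb]
    simp [measure_univ]; ring
  have hCS := cs_integral hf hg
  rw [hcross, hVu, hVv] at hCS
  have hexp : ∫ x, (u x - v x) ^ 2 ∂ν = A + B - 2 * ∫ x, u x * v x ∂ν := by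
    have h : (fun x => (u x - v x) ^ 2)
        = fun x => (u x ^ 2 + v x ^ 2) - 2 * (u x * v x) := by funext x; ring
    have k1 : Integrable (fun x => u x ^ 2 + v x ^ 2) ν := hu2.add hv2
    have k2 : Integrable (fun x => 2 * (u x * v x)) ν := huv.const_mul 2
    rw [h, integral_sub k1 k2, integral_add hu2 hv2, integral_const_mul, hA, hB]
  rw [hexp]
  have hS := Real.sq_sqrt hVu0
  have hT := Real.sq_sqrt hVv0
  nlinarith [Real.sqrt_nonneg (A - a ^ 2), Real.sqrt_nonneg (B - b ^ 2), hCS]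


/-- **Lower bound on the transport cost between a distribution and its zero-imputed version.**
Let `X` be a random vector in `ℝ^d` with `E‖X‖² < ∞`, mean `m` and diagonal covariance
`diag(σ₁²,…,σ_d²)` with `σᵢ > 0`, let `M = diag(w)` with `wᵢ ≥ 0`, and let `W` be an MCAR mask
with probability vector `p ∈ (0,1]^d`, independent of `X`. Then every coupling `γ` of the law of
the zero-imputed vector `X ⊙ W` (first marginal) and the law of `X` (second marginal) satisfies
`∫ (x−y)ᵀM(x−y) dγ ≥ ‖(P−I)m‖_M² + ∑ᵢ wᵢ (σᵢ − √pᵢ √(σᵢ² + (1−pᵢ) mᵢ²))²`. -/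
theorem masked_wasserstein_lower_bound
    {Ω : Type*} [MeasurableSpace Ω] (μP : Measure Ω) [IsProbabilityMeasure μP]
    {d : ℕ} (X W : Ω → Fin d → ℝ) (p m σ w : Fin d → ℝ)
    (hp : ∀ i, p i ∈ Set.Ioc (0 : ℝ) 1)
    (hσ : ∀ i, 0 < σ i) (hw : ∀ i, 0 ≤ w i)
    (hXmeas : Measurable X) (hWmeas : Measurable W)
    (hX2 : Integrable (fun a => ∑ i, (X a i) ^ 2) μP)
    (hmean : ∀ i, ∫ a, X a i ∂μP = m i)
    (hcov : ∀ i j, ∫ a, (X a i - m i) * (X a j - m j) ∂μP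
      = if i = j then (σ i) ^ 2 else 0)
    (hW01 : ∀ᵐ a ∂μP, ∀ i, W a i = 0 ∨ W a i = 1)
    (hWber : ∀ i, μP {a | W a i = 1} = ENNReal.ofReal (p i))
    (hWiIndep : iIndepFun (fun i a => W a i) μP)
    (hIndep : IndepFun W X μP)
    (γ : Measure ((Fin d → ℝ) × (Fin d → ℝ))) [IsProbabilityMeasure γ]
    (hfst : γ.map Prod.fst = μP.map (fun a k => X a k * W a k))
    (hsnd : γ.map Prod.snd = μP.map X) :
    ENNReal.ofReal
        ((∑ i, w i * ((p i - 1) * m i) ^ 2)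
          + ∑ i, w i * (σ i - Real.sqrt (p i)
              * Real.sqrt ((σ i) ^ 2 + (1 - p i) * (m i) ^ 2)) ^ 2)
      ≤ ∫⁻ z, ENNReal.ofReal
          ((fun k => z.1 k - z.2 k) ⬝ᵥ (Matrix.diagonal w *ᵥ fun k => z.1 k - z.2 k)) ∂γ := by
  have hUmeas : Measurable (fun a k => X a k * W a k) := by
    exact measurable_pi_lambda _ fun k =>
      ((measurable_pi_apply k).comp hXmeas).mul ((measurable_pi_apply k).comp hWmeas)
  -- per-coordinate bound
  have key : ∀ i : Fin d,
      ENNReal.ofReal (w i * ((p i - 1) * m i) ^ 2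
          + w i * (σ i - Real.sqrt (p i) * Real.sqrt ((σ i) ^ 2 + (1 - p i) * (m i) ^ 2)) ^ 2)
        ≤ ∫⁻ z, ENNReal.ofReal (w i * (z.1 i - z.2 i) ^ 2) ∂γ := by
    intro i
    have hpi := hp i
    have hXim : Measurable fun a => X a i := (measurable_pi_apply i).comp hXmeas
    have hWim : Measurable fun a => W a i := (measurable_pi_apply i).comp hWmeas
    have hWi01 : ∀ᵐ a ∂μP, W a i = 0 ∨ W a i = 1 := hW01.mono fun a h => h i
    -- integrability under μP
    have hXi2 : Integrable (fun a => X a i ^ 2) μP := by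
      refine hX2.mono' ((hXim.pow_const 2).aestronglyMeasurable)
        (Filter.Eventually.of_forall fun a => ?_)
      rw [Real.norm_eq_abs, abs_of_nonneg (sq_nonneg _)]
      exact Finset.single_le_sum (fun j _ => sq_nonneg (X a j)) (Finset.mem_univ i)
    have hXii : Integrable (fun a => X a i) μP :=
      ((memLp_two_iff_integrable_sq hXim.aestronglyMeasurable).2 hXi2).integrable one_le_two
    have hWii : Integrable (fun a => W a i) μP := by
      refine (integrable_const (1:ℝ)).mono' hWim.aestronglyMeasurable
        (hWi01.mono fun a h => ?_)
      rcases h with h | h <;> simp [h]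
    have hWi2 : Integrable (fun a => W a i ^ 2) μP := by
      refine (integrable_const (1:ℝ)).mono' ((hWim.pow_const 2).aestronglyMeasurable)
        (hWi01.mono fun a h => ?_)
      rcases h with h | h <;> simp [h]
    have hUi2 : Integrable (fun a => (X a i * W a i) ^ 2) μP := by
      refine hXi2.mono' (((hXim.mul hWim).pow_const 2).aestronglyMeasurable)
        (hWi01.mono fun a h => ?_)
      rw [Real.norm_eq_abs, abs_of_nonneg (sq_nonneg _)]
      rcases h with h | h <;> simp [h, mul_pow, sq_nonneg]
    -- moments of X i
    have hEXi2 : ∫ a, X a i ^ 2 ∂μP = σ i ^ 2 + m i ^ 2 := by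
      have h1 : ∫ a, (X a i - m i) ^ 2 ∂μP = σ i ^ 2 := by
        have := hcov i i
        rw [if_pos rfl] at this
        rw [← this]
        exact integral_congr_ae (Filter.Eventually.of_forall fun a => sq (X a i - m i))
      rw [integral_sub_const_sq μP (fun a => X a i) (m i) hXii hXi2, hmean i] at h1
      nlinarith [h1]
    -- moments of W i
    have hEWi : ∫ a, W a i ∂μP = p i := by
      have hs : MeasurableSet {a | W a i = 1} := hWim (measurableSet_singleton 1)
      have he : (fun a => W a i) =ᵐ[μP] ({a | W a i = 1}).indicator 1 := by
        refine hWi01.mono fun a h => ?_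
        rcases h with h | h
        · have : a ∉ {a | W a i = 1} := by simp [Set.mem_setOf_eq, h]
          simp [Set.indicator_apply, this, h]
        · have : a ∈ {a | W a i = 1} := h
          simp [Set.indicator_apply, this, h]
      rw [integral_congr_ae he, integral_indicator_one hs, measureReal_def, hWber i,
        ENNReal.toReal_ofReal hpi.1.le]
    have hEWi2 : ∫ a, W a i ^ 2 ∂μP = p i := by
      rw [← hEWi]
      refine integral_congr_ae (hWi01.mono fun a h => ?_)
      rcases h with h | h <;> simp [h]
    -- independence
    have hIXiWi : IndepFun (fun a => X a i) (fun a => W a i) μP :=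
      (hIndep.comp (measurable_pi_apply i) (measurable_pi_apply i)).symm
    have hIX2W2 : IndepFun (fun a => X a i ^ 2) (fun a => W a i ^ 2) μP :=
      (hIndep.comp ((measurable_pi_apply i).pow_const 2)
        ((measurable_pi_apply i).pow_const 2)).symm
    have hEUi : ∫ a, X a i * W a i ∂μP = p i * m i := by
      rw [hIXiWi.integral_fun_mul_eq_mul_integral hXim.aestronglyMeasurable hWim.aestronglyMeasurable,
        hmean i, hEWi, mul_comm]
    have hEUi2 : ∫ a, (X a i * W a i) ^ 2 ∂μP = p i * (σ i ^ 2 + m i ^ 2) := by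
      have h : (fun a => (X a i * W a i) ^ 2) = fun a => X a i ^ 2 * W a i ^ 2 := by
        funext a; ring
      rw [h, hIX2W2.integral_fun_mul_eq_mul_integral (hXim.pow_const 2).aestronglyMeasurable
        (hWim.pow_const 2).aestronglyMeasurable, hEXi2, hEWi2, mul_comm]
    -- transport to γ
    have hgm1 : Measurable fun y : Fin d → ℝ => y i := measurable_pi_apply i
    have hgm2 : Measurable fun y : Fin d → ℝ => y i ^ 2 := hgm1.pow_const 2
    have hmom1 : ∫ z, z.1 i ∂γ = p i * m i := by
      rw [show (∫ z, z.1 i ∂γ) = ∫ y, y i ∂(γ.map Prod.fst) from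
          (integral_map measurable_fst.aemeasurable hgm1.aestronglyMeasurable).symm,
        hfst, integral_map hUmeas.aemeasurable hgm1.aestronglyMeasurable]
      exact hEUi
    have hmom2 : ∫ z, z.1 i ^ 2 ∂γ = p i * (σ i ^ 2 + m i ^ 2) := by
      rw [show (∫ z, z.1 i ^ 2 ∂γ) = ∫ y, y i ^ 2 ∂(γ.map Prod.fst) from
          (integral_map measurable_fst.aemeasurable hgm2.aestronglyMeasurable).symm,
        hfst, integral_map hUmeas.aemeasurable hgm2.aestronglyMeasurable]
      exact hEUi2
    have hmom3 : ∫ z, z.2 i ∂γ = m i := by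
      rw [show (∫ z, z.2 i ∂γ) = ∫ y, y i ∂(γ.map Prod.snd) from
          (integral_map measurable_snd.aemeasurable hgm1.aestronglyMeasurable).symm,
        hsnd, integral_map hXmeas.aemeasurable hgm1.aestronglyMeasurable]
      exact hmean i
    have hmom4 : ∫ z, z.2 i ^ 2 ∂γ = σ i ^ 2 + m i ^ 2 := by
      rw [show (∫ z, z.2 i ^ 2 ∂γ) = ∫ y, y i ^ 2 ∂(γ.map Prod.snd) from
          (integral_map measurable_snd.aemeasurable hgm2.aestronglyMeasurable).symm,
        hsnd, integral_map hXmeas.aemeasurable hgm2.aestronglyMeasurable]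
      exact hEXi2
    have hu2γ : Integrable (fun z : (Fin d → ℝ) × (Fin d → ℝ) => z.1 i ^ 2) γ := by
      have h1 : Integrable (fun y => y i ^ 2) (μP.map (fun a k => X a k * W a k)) :=
        (integrable_map_measure hgm2.aestronglyMeasurable hUmeas.aemeasurable).2 hUi2
      have h2 : Integrable (fun y => y i ^ 2) (γ.map Prod.fst) := hfst ▸ h1
      exact (integrable_map_measure hgm2.aestronglyMeasurable measurable_fst.aemeasurable).1 h2
    have hv2γ : Integrable (fun z : (Fin d → ℝ) × (Fin d → ℝ) => z.2 i ^ 2) γ := by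
      have h1 : Integrable (fun y => y i ^ 2) (μP.map X) :=
        (integrable_map_measure hgm2.aestronglyMeasurable hXmeas.aemeasurable).2 hXi2
      have h2 : Integrable (fun y => y i ^ 2) (γ.map Prod.snd) := hsnd ▸ h1
      exact (integrable_map_measure hgm2.aestronglyMeasurable measurable_snd.aemeasurable).1 h2
    have huγ : MemLp (fun z : (Fin d → ℝ) × (Fin d → ℝ) => z.1 i) 2 γ :=
      (memLp_two_iff_integrable_sq
        ((hgm1.comp measurable_fst).aestronglyMeasurable)).2 hu2γ
    have hvγ : MemLp (fun z : (Fin d → ℝ) × (Fin d → ℝ) => z.2 i) 2 γ :=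
      (memLp_two_iff_integrable_sq
        ((hgm1.comp measurable_snd).aestronglyMeasurable)).2 hv2γ
    -- the one-dimensional bound
    have hbd := one_dim γ huγ hvγ hmom1 hmom2 hmom3 hmom4
    have hc1 : p i * m i - m i = (p i - 1) * m i := by ring
    have hc2 : Real.sqrt (σ i ^ 2 + m i ^ 2 - m i ^ 2) = σ i := by
      rw [show σ i ^ 2 + m i ^ 2 - m i ^ 2 = σ i ^ 2 by ring, Real.sqrt_sq (hσ i).le]
    have hc3 : Real.sqrt (p i * (σ i ^ 2 + m i ^ 2) - (p i * m i) ^ 2)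
        = Real.sqrt (p i) * Real.sqrt (σ i ^ 2 + (1 - p i) * m i ^ 2) := by
      rw [show p i * (σ i ^ 2 + m i ^ 2) - (p i * m i) ^ 2
          = p i * (σ i ^ 2 + (1 - p i) * m i ^ 2) by ring, Real.sqrt_mul hpi.1.le]
    rw [hc1, hc2, hc3] at hbd
    have hintg : Integrable (fun z : (Fin d → ℝ) × (Fin d → ℝ) => w i * (z.1 i - z.2 i) ^ 2) γ :=
      ((huγ.sub hvγ).integrable_sq).const_mul _
    rw [← ofReal_integral_eq_lintegral_ofReal hintg
      (Filter.Eventually.of_forall fun z => mul_nonneg (hw i) (sq_nonneg _))]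
    apply ENNReal.ofReal_le_ofReal
    rw [integral_const_mul, ← mul_add]
    exact mul_le_mul_of_nonneg_left hbd (hw i)
  -- assemble
  have hdot : ∀ z : (Fin d → ℝ) × (Fin d → ℝ),
      ((fun k => z.1 k - z.2 k) ⬝ᵥ (Matrix.diagonal w *ᵥ fun k => z.1 k - z.2 k))
        = ∑ i, w i * (z.1 i - z.2 i) ^ 2 := by
    intro z
    simp only [dotProduct, Matrix.mulVec_diagonal]
    exact Finset.sum_congr rfl fun i _ => by ring
  have hterm_nonneg : ∀ (i : Fin d) (z : (Fin d → ℝ) × (Fin d → ℝ)),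
      0 ≤ w i * (z.1 i - z.2 i) ^ 2 := fun i z => mul_nonneg (hw i) (sq_nonneg _)
  calc ENNReal.ofReal
        ((∑ i, w i * ((p i - 1) * m i) ^ 2)
          + ∑ i, w i * (σ i - Real.sqrt (p i)
              * Real.sqrt ((σ i) ^ 2 + (1 - p i) * (m i) ^ 2)) ^ 2)
      = ∑ i, ENNReal.ofReal (w i * ((p i - 1) * m i) ^ 2
          + w i * (σ i - Real.sqrt (p i)
              * Real.sqrt ((σ i) ^ 2 + (1 - p i) * (m i) ^ 2)) ^ 2) := by
        rw [← Finset.sum_add_distrib, ENNReal.ofReal_sum_of_nonneg fun i _ =>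
          add_nonneg (mul_nonneg (hw i) (sq_nonneg _)) (mul_nonneg (hw i) (sq_nonneg _))]
    _ ≤ ∑ i, ∫⁻ z, ENNReal.ofReal (w i * (z.1 i - z.2 i) ^ 2) ∂γ :=
        Finset.sum_le_sum fun i _ => key i
    _ = ∫⁻ z, ∑ i, ENNReal.ofReal (w i * (z.1 i - z.2 i) ^ 2) ∂γ := by
        refine (lintegral_finset_sum _ fun i _ => ?_).symm
        exact (measurable_const.mul ((((measurable_pi_apply i).comp measurable_fst).sub
          ((measurable_pi_apply i).comp measurable_snd)).pow_const 2)).ennreal_ofReal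
    _ = ∫⁻ z, ENNReal.ofReal
          ((fun k => z.1 k - z.2 k) ⬝ᵥ (Matrix.diagonal w *ᵥ fun k => z.1 k - z.2 k)) ∂γ := by
        refine lintegral_congr fun z => ?_
        rw [hdot z, ENNReal.ofReal_sum_of_nonneg fun i _ => hterm_nonneg i z]
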